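/- Let r ≥ 3, k = 2r-1, and let K be a complete r-uniform r-partite hypergraph with a spanning k-coloring such that the vertex set cannot be covered by r monochromatic components. Then for any two vertices a, b in different partite classes, the Hamming distance of their component vectors satisfies r-1 ≤ δ(a,b) ≤ r. -/

import Mathlib

open Classical

variable {V : Type*}

/-- `e` is an edge of the complete `r`-uniform `r`-partite hypergraph with
partition `part`: it meets every class in exactly one vertex. -/
def IsPartiteEdge {r : ℕ} (part : V → Fin r) (e : Finset V) : Prop :=
  ∀ i : Fin r, (e.filter fun v => part v = i).card = 1

/-- `e` is an edge of the complete `r`-uniform `(r,ℓ)`-partite hypergraph: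
an `r`-set meeting every class in at most `ℓ` vertices. -/
def IsRLEdge {r : ℕ} (part : V → Fin r) (ℓ : ℕ) (e : Finset V) : Prop :=
  e.card = r ∧ ∀ i : Fin r, (e.filter fun v => part v = i).card ≤ ℓ

/-- An edge is friendly if it meets at most one class in exactly `ℓ` vertices. -/
def Friendly {r : ℕ} (part : V → Fin r) (ℓ : ℕ) (e : Finset V) : Prop :=
  (Finset.univ.filter fun i : Fin r => (e.filter fun v => part v = i).card = ℓ).card ≤ 1

/-- `u` and `v` lie in the same monochromatic component of color `c` of the
hypergraph with edge predicate `E` and edge coloring `χ`. -/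
def MonoConn {k : ℕ} (E : Finset V → Prop) (χ : Finset V → Fin k) (c : Fin k)
    (u v : V) : Prop :=
  Relation.ReflTransGen (fun a b => ∃ e : Finset V, E e ∧ χ e = c ∧ a ∈ e ∧ b ∈ e) u v

/-- The coloring `χ` is spanning: every vertex is incident with an edge of every color. -/
def Spanning {k : ℕ} (E : Finset V → Prop) (χ : Finset V → Fin k) : Prop :=
  ∀ v : V, ∀ c : Fin k, ∃ e : Finset V, E e ∧ χ e = c ∧ v ∈ e

/-- The vertex set can be covered by at most `m` monochromatic components. -/
def CoversBy {k : ℕ} (E : Finset V → Prop) (χ : Finset V → Fin k) (m : ℕ) : Prop :=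
  ∃ f : Fin m → Fin k × V, ∀ v : V, ∃ i : Fin m, MonoConn E χ (f i).1 (f i).2 v

/-- Hamming distance of the component vectors of two vertices: the number of
colors `c` for which they lie in different monochromatic components of color `c`. -/
noncomputable def HamDist {k : ℕ} (E : Finset V → Prop) (χ : Finset V → Fin k)
    (v w : V) : ℕ :=
  (Finset.univ.filter fun c : Fin k => ¬ MonoConn E χ c v w).card

namespace Stmt10Aux

set_option linter.unusedSectionVars false

lemma mc_symm {k : ℕ} {E : Finset V → Prop} {χ : Finset V → Fin k} {c : Fin k} {u v : V}
    (h : MonoConn E χ c u v) : MonoConn E χ c v u := by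
  refine (@Relation.ReflTransGen.symmetric _ _ ⟨?_⟩ : Std.Symm _).symm _ _ h
  rintro x y ⟨e, he, hc, hx, hy⟩
  exact ⟨e, he, hc, hy, hx⟩

lemma mc_trans {k : ℕ} {E : Finset V → Prop} {χ : Finset V → Fin k} {c : Fin k} {u v w : V}
    (h1 : MonoConn E χ c u v) (h2 : MonoConn E χ c v w) : MonoConn E χ c u w :=
  Relation.ReflTransGen.trans h1 h2

lemma edge_mem_conn {k : ℕ} {E : Finset V → Prop} {χ : Finset V → Fin k} {e : Finset V}
    (hE : E e) {u v : V} (hu : u ∈ e) (hv : v ∈ e) : MonoConn E χ (χ e) u v :=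
  Relation.ReflTransGen.single ⟨e, hE, rfl, hu, hv⟩

lemma isPartiteEdge_image {r : ℕ} {part : V → Fin r} (g : Fin r → V)
    (hg : ∀ i, part (g i) = i) :
    IsPartiteEdge part (Finset.image g Finset.univ) := by
  intro i
  have h : (Finset.image g Finset.univ).filter (fun v => part v = i) = {g i} := by
    ext x
    simp only [Finset.mem_filter, Finset.mem_image, Finset.mem_univ, true_and,
      Finset.mem_singleton]
    constructor
    · rintro ⟨⟨j, rfl⟩, hx⟩
      have : j = i := by rw [hg j] at hx; exact hx
      subst this; rfl
    · rintro rfl; exact ⟨⟨i, rfl⟩, hg i⟩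
  rw [h, Finset.card_singleton]

/-- From a class-correct selection we get an edge color connecting all selected vertices. -/
lemma sel_edge {r : ℕ} {part : V → Fin r} {k : ℕ} (χ : Finset V → Fin k)
    (g : Fin r → V) (hg : ∀ i, part (g i) = i) :
    ∃ γ : Fin k, ∀ i j : Fin r,
      MonoConn (IsPartiteEdge part) χ γ (g i) (g j) := by
  refine ⟨χ (Finset.image g Finset.univ), fun i j => ?_⟩
  exact edge_mem_conn (isPartiteEdge_image g hg)
    (Finset.mem_image_of_mem g (Finset.mem_univ i))
    (Finset.mem_image_of_mem g (Finset.mem_univ j))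

lemma edge_rep {r : ℕ} {part : V → Fin r} {e : Finset V} (he : IsPartiteEdge part e)
    (i : Fin r) : ∃ w ∈ e, part w = i := by
  have h := he i
  rw [Finset.card_eq_one] at h
  obtain ⟨w, hw⟩ := h
  have hmem : w ∈ e.filter fun v => part v = i := by
    rw [hw]; exact Finset.mem_singleton_self w
  rw [Finset.mem_filter] at hmem
  exact ⟨w, hmem.1, hmem.2⟩

lemma spanning_rep {r k : ℕ} {part : V → Fin r} {χ : Finset V → Fin k}
    (hs : Spanning (IsPartiteEdge part) χ) (v : V) (c : Fin k) (i0 : Fin r) :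
    ∃ w, part w = i0 ∧ MonoConn (IsPartiteEdge part) χ c v w := by
  obtain ⟨e, he, hc, hv⟩ := hs v c
  obtain ⟨w, hwe, hwi⟩ := edge_rep he i0
  refine ⟨w, hwi, ?_⟩
  have := edge_mem_conn (χ := χ) he hv hwe
  rwa [hc] at this

section Main

variable [Fintype V] {r : ℕ} {part : V → Fin r} {χ : Finset V → Fin (2 * r - 1)}

/-- If a whole class is covered by the `d`-components of `p` and `q`, we get a cover of `V`
by `r` components, contradiction. -/
lemma two_center (hr : 3 ≤ r)
    (hs : Spanning (IsPartiteEdge part) χ) (hnc : ¬ CoversBy (IsPartiteEdge part) χ r)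
    (d : Fin (2 * r - 1)) (p q : V) (i0 : Fin r)
    (h : ∀ w, part w = i0 → MonoConn (IsPartiteEdge part) χ d p w ∨
      MonoConn (IsPartiteEdge part) χ d q w) : False := by
  apply hnc
  refine ⟨fun j => if j.val = 0 then (d, p) else (d, q), fun v => ?_⟩
  obtain ⟨w, hw, hconn⟩ := spanning_rep hs v d i0
  rcases h w hw with h' | h'
  · refine ⟨⟨0, by omega⟩, ?_⟩
    simpa using mc_trans h' (mc_symm hconn)
  · refine ⟨⟨1, by omega⟩, ?_⟩
    simpa using mc_trans h' (mc_symm hconn)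

lemma exists_dodger (hr : 3 ≤ r)
    (hs : Spanning (IsPartiteEdge part) χ) (hnc : ¬ CoversBy (IsPartiteEdge part) χ r)
    (d : Fin (2 * r - 1)) (p : V) (i0 : Fin r) :
    ∃ z, part z = i0 ∧ ¬ MonoConn (IsPartiteEdge part) χ d p z := by
  by_contra h
  push_neg at h
  exact two_center hr hs hnc d p p i0 (fun w hw => Or.inl (h w hw))

/-- Any two vertices in different classes are connected in at least `r-1` colors. -/
lemma agr_card_ge (hr : 3 ≤ r) (hne : ∀ i : Fin r, ∃ v, part v = i)
    (hs : Spanning (IsPartiteEdge part) χ) (hnc : ¬ CoversBy (IsPartiteEdge part) χ r)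
    {a b : V} (hab : part a ≠ part b) :
    r - 1 ≤ (Finset.univ.filter fun c : Fin (2*r-1) =>
      MonoConn (IsPartiteEdge part) χ c a b).card := by
  by_contra hlt
  push_neg at hlt
  set S := Finset.univ.filter (fun c : Fin (2*r-1) =>
    MonoConn (IsPartiteEdge part) χ c a b) with hSdef
  set O : Finset (Fin r) := ({part a, part b} : Finset (Fin r))ᶜ with hOdef
  have hO : O.card = r - 2 := by
    rw [hOdef, Finset.card_compl]
    rw [Finset.card_insert_of_notMem (by simpa using hab), Finset.card_singleton]
    simp
  have hle : S.card ≤ O.card := by omega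
  set eS := S.orderIsoOfFin rfl with heS
  set eO := O.orderIsoOfFin rfl with heO
  set ι : {y // y ∈ S} → Fin r := fun c => (eO (Fin.castLE hle (eS.symm c)) : Fin r) with hιdef
  have hιO : ∀ c, ι c ∈ O := fun c => (eO (Fin.castLE hle (eS.symm c))).2
  have hιa : ∀ c, ι c ≠ part a := by
    intro c
    have := hιO c
    rw [hOdef, Finset.mem_compl] at this
    simp only [Finset.mem_insert, Finset.mem_singleton] at this
    tauto
  have hιb : ∀ c, ι c ≠ part b := by
    intro c
    have := hιO c
    rw [hOdef, Finset.mem_compl] at this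
    simp only [Finset.mem_insert, Finset.mem_singleton] at this
    tauto
  have hinj : ∀ c c' : {y // y ∈ S}, ι c = ι c' → c = c' := by
    intro c c' h
    have h1 : eO (Fin.castLE hle (eS.symm c)) = eO (Fin.castLE hle (eS.symm c')) :=
      Subtype.ext h
    have h2 := eO.injective h1
    have h3 : ((eS.symm c : Fin S.card) : ℕ) = ((eS.symm c' : Fin S.card) : ℕ) := by
      have := congrArg Fin.val h2
      simpa [Fin.castLE] using this
    have h4 : eS.symm c = eS.symm c' := Fin.ext h3
    have := congrArg eS h4
    simpa using this
  have hzex : ∀ c : {y // y ∈ S}, ∃ z, part z = ι c ∧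
      ¬ MonoConn (IsPartiteEdge part) χ c.val a z := fun c =>
    exists_dodger hr hs hnc c.val a (ι c)
  choose z hz1 hz2 using hzex
  choose w hw using hne
  have hselex : ∀ i : Fin r, ∃ x : V, part x = i ∧ (i = part a → x = a) ∧
      (i = part b → x = b) ∧
      (∀ c : {y // y ∈ S}, ι c = i → ¬ MonoConn (IsPartiteEdge part) χ c.val a x) := by
    intro i
    by_cases h1 : i = part a
    · refine ⟨a, h1.symm, fun _ => rfl, fun h2 => absurd (h1.symm.trans h2) hab, ?_⟩
      intro c hc
      exact absurd (hc.symm ▸ h1 : ι c = part a) (hιa c)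
    · by_cases h2 : i = part b
      · refine ⟨b, h2.symm, fun h => absurd (h.symm.trans h2) hab, fun _ => rfl, ?_⟩
        intro c hc
        exact absurd (hc.symm ▸ h2 : ι c = part b) (hιb c)
      · by_cases h3 : ∃ c : {y // y ∈ S}, ι c = i
        · obtain ⟨c, hc⟩ := h3
          refine ⟨z c, hc ▸ hz1 c, fun h => absurd (h ▸ rfl) h1, fun h => absurd (h ▸ rfl) h2, ?_⟩
          intro c' hc'
          have : c' = c := hinj _ _ (by rw [hc, hc'])
          rw [this]
          exact hz2 c
        · refine ⟨w i, hw i, fun h => absurd (h ▸ rfl) h1, fun h => absurd (h ▸ rfl) h2, ?_⟩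
          intro c hc
          exact absurd ⟨c, hc⟩ h3
  choose g hgpart hga hgb hgz using hselex
  obtain ⟨γ, hγ⟩ := sel_edge χ g hgpart
  have hconn_ab : MonoConn (IsPartiteEdge part) χ γ a b := by
    have := hγ (part a) (part b)
    rwa [hga (part a) rfl, hgb (part b) rfl] at this
  have hγS : γ ∈ S := by
    rw [hSdef]
    simp [hconn_ab]
  set c₀ : {y // y ∈ S} := ⟨γ, hγS⟩ with hc₀
  have hdodge := hgz (ι c₀) c₀ rfl
  have hconn : MonoConn (IsPartiteEdge part) χ γ a (g (ι c₀)) := by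
    have := hγ (part a) (ι c₀)
    rwa [hga (part a) rfl] at this
  exact hdodge hconn

noncomputable def Ag (part : V → Fin r) (χ : Finset V → Fin (2 * r - 1)) (u v : V) :
    Finset (Fin (2 * r - 1)) :=
  Finset.univ.filter fun c => MonoConn (IsPartiteEdge part) χ c u v

lemma mem_Ag {u v : V} {c : Fin (2 * r - 1)} :
    c ∈ Ag part χ u v ↔ MonoConn (IsPartiteEdge part) χ c u v := by
  simp [Ag]

lemma Ag_card_ge (hr : 3 ≤ r) (hne : ∀ i : Fin r, ∃ v, part v = i)
    (hs : Spanning (IsPartiteEdge part) χ) (hnc : ¬ CoversBy (IsPartiteEdge part) χ r)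
    {a b : V} (hab : part a ≠ part b) : r - 1 ≤ (Ag part χ a b).card :=
  agr_card_ge hr hne hs hnc hab

/-- From non-coverability, for every `r` colors there is a vertex avoiding all those
components of `p`. -/
lemma escape (hnc : ¬ CoversBy (IsPartiteEdge part) χ r)
    (F : Finset (Fin (2*r-1))) (hF : F.card = r) (p : V) :
    ∃ v : V, ∀ c ∈ F, ¬ MonoConn (IsPartiteEdge part) χ c p v := by
  by_contra h
  push_neg at h
  apply hnc
  set eF := F.orderIsoOfFin hF with heF
  refine ⟨fun j => ((eF j : Fin (2*r-1)), p), fun v => ?_⟩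
  obtain ⟨c, hcF, hconn⟩ := h v
  refine ⟨eF.symm ⟨c, hcF⟩, ?_⟩
  simpa using hconn

lemma unionSc_card {r : ℕ} (hr : 3 ≤ r) {S G : Finset (Fin (2*r-1))} (hGS : G ⊆ S)
    (hG : G.card = S.card - r) (hs1 : r + 1 ≤ S.card) : (G ∪ Sᶜ).card = r - 1 := by
  have hdisj : Disjoint G Sᶜ := (disjoint_compl_right).mono_left hGS
  have hSle : S.card ≤ 2*r-1 := by
    have := Finset.card_le_univ S
    simpa [Fintype.card_fin] using this
  rw [Finset.card_union_of_disjoint hdisj, Finset.card_compl, hG]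
  simp only [Fintype.card_fin]
  omega

/-- Realizers: for every `G ⊆ S` of size `t`, there is a vertex in the class of `p` or `q`
whose agreement set with the other one is exactly `G ∪ Sᶜ`. -/
lemma realizer (hr : 3 ≤ r) (hne : ∀ i : Fin r, ∃ v, part v = i)
    (hs : Spanning (IsPartiteEdge part) χ) (hnc : ¬ CoversBy (IsPartiteEdge part) χ r)
    {p q : V} (hpq : part p ≠ part q)
    {S : Finset (Fin (2*r-1))}
    (hSpq : ∀ c, c ∈ S ↔ MonoConn (IsPartiteEdge part) χ c p q)
    (hs1 : r + 1 ≤ S.card) (hs2 : S.card ≤ 2*r-2)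
    {G : Finset (Fin (2*r-1))} (hGS : G ⊆ S) (hG : G.card = S.card - r) :
    ∃ v, (part v = part q ∧ Ag part χ p v = G ∪ Sᶜ) ∨
         (part v = part p ∧ Ag part χ q v = G ∪ Sᶜ) := by
  have hGcard : (G ∪ Sᶜ).card = r - 1 := unionSc_card hr hGS hG hs1
  set F := S \ G with hFdef
  have hF : F.card = r := by
    rw [hFdef, Finset.card_sdiff_of_subset hGS, hG]
    omega
  obtain ⟨v, hesc⟩ := escape hnc F hF p
  have hesc_q : ∀ c ∈ F, ¬ MonoConn (IsPartiteEdge part) χ c q v := by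
    intro c hcF hcq
    have hcS : c ∈ S := (Finset.sdiff_subset) hcF
    exact hesc c hcF (mc_trans ((hSpq c).mp hcS) hcq)
  have hsub_p : Ag part χ p v ⊆ G ∪ Sᶜ := by
    intro c hc
    rw [mem_Ag] at hc
    rw [Finset.mem_union, Finset.mem_compl]
    by_contra hcon
    push_neg at hcon
    exact hesc c (Finset.mem_sdiff.mpr ⟨hcon.2, hcon.1⟩) hc
  have hsub_q : Ag part χ q v ⊆ G ∪ Sᶜ := by
    intro c hc
    rw [mem_Ag] at hc
    rw [Finset.mem_union, Finset.mem_compl]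
    by_contra hcon
    push_neg at hcon
    exact hesc_q c (Finset.mem_sdiff.mpr ⟨hcon.2, hcon.1⟩) hc
  by_cases hvq : part v = part q
  · refine ⟨v, Or.inl ⟨hvq, Finset.eq_of_subset_of_card_le hsub_p ?_⟩⟩
    rw [hGcard]
    exact Ag_card_ge hr hne hs hnc (by rw [hvq]; exact hpq)
  by_cases hvp : part v = part p
  · refine ⟨v, Or.inr ⟨hvp, Finset.eq_of_subset_of_card_le hsub_q ?_⟩⟩
    rw [hGcard]
    exact Ag_card_ge hr hne hs hnc (by rw [hvp]; exact fun h => hpq h.symm)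
  · exfalso
    have heq_p : Ag part χ p v = G ∪ Sᶜ := Finset.eq_of_subset_of_card_le hsub_p
      (by rw [hGcard]; exact Ag_card_ge hr hne hs hnc (fun h => hvp h.symm))
    have heq_q : Ag part χ q v = G ∪ Sᶜ := Finset.eq_of_subset_of_card_le hsub_q
      (by rw [hGcard]; exact Ag_card_ge hr hne hs hnc (fun h => hvq h.symm))
    have hScne : Sᶜ.Nonempty := by
      rw [← Finset.card_pos, Finset.card_compl]
      simp only [Fintype.card_fin]
      omega
    obtain ⟨d, hd⟩ := hScne
    have hdp : MonoConn (IsPartiteEdge part) χ d p v := by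
      rw [← mem_Ag (part := part) (χ := χ), heq_p]
      exact Finset.mem_union_right _ hd
    have hdq : MonoConn (IsPartiteEdge part) χ d q v := by
      rw [← mem_Ag (part := part) (χ := χ), heq_q]
      exact Finset.mem_union_right _ hd
    have : d ∈ S := (hSpq d).mpr (mc_trans hdp (mc_symm hdq))
    exact (Finset.mem_compl.mp hd) this

set_option maxHeartbeats 1000000 in
/-- Rigidity: given a realizer `w` for `G'` (on the `q`-side), no outside vertex can miss two
of the colors of `G' ∪ Sᶜ` with respect to `p`. -/
lemma rigidity (hr : 3 ≤ r) (hne : ∀ i : Fin r, ∃ v, part v = i)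
    (hs : Spanning (IsPartiteEdge part) χ) (hnc : ¬ CoversBy (IsPartiteEdge part) χ r)
    {p q : V} (hpq : part p ≠ part q)
    {S : Finset (Fin (2*r-1))}
    {G' : Finset (Fin (2*r-1))} (hGcard : (G' ∪ Sᶜ).card = r - 1)
    {w : V} (hw : part w = part q) (hwAg : Ag part χ p w = G' ∪ Sᶜ)
    {x : V} (hx1 : part x ≠ part p) (hx2 : part x ≠ part q)
    {c1 c2 : Fin (2*r-1)} (hc1 : c1 ∈ G' ∪ Sᶜ) (hc2 : c2 ∈ G' ∪ Sᶜ) (hcc : c1 ≠ c2)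
    (m1 : ¬ MonoConn (IsPartiteEdge part) χ c1 p x)
    (m2 : ¬ MonoConn (IsPartiteEdge part) χ c2 p x) : False := by
  classical
  set K : Finset (Fin (2*r-1)) := ((G' ∪ Sᶜ).erase c1).erase c2 with hKdef
  have hc2' : c2 ∈ (G' ∪ Sᶜ).erase c1 := Finset.mem_erase.mpr ⟨Ne.symm hcc, hc2⟩
  have hKcard : K.card = r - 3 := by
    rw [hKdef, Finset.card_erase_of_mem hc2', Finset.card_erase_of_mem hc1, hGcard]
    omega
  set O : Finset (Fin r) := ({part p, part q, part x} : Finset (Fin r))ᶜ with hOdef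
  have hOcard : O.card = r - 3 := by
    rw [hOdef, Finset.card_compl]
    have h1 : part q ∉ ({part x} : Finset (Fin r)) := by simp [Ne.symm hx2]
    have h2 : part p ∉ ({part q, part x} : Finset (Fin r)) := by
      simp [hpq, Ne.symm hx1]
    rw [Finset.card_insert_of_notMem h2, Finset.card_insert_of_notMem h1,
      Finset.card_singleton]
    simp
  set eK := K.orderIsoOfFin hKcard with heK
  set eO := O.orderIsoOfFin hOcard with heO
  set ι : {y // y ∈ K} → Fin r := fun c => (eO (eK.symm c) : Fin r) with hιdef
  have hιO : ∀ c, ι c ∈ O := fun c => (eO (eK.symm c)).2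
  have hιp : ∀ c, ι c ≠ part p := by
    intro c
    have := hιO c
    rw [hOdef, Finset.mem_compl] at this
    simp only [Finset.mem_insert, Finset.mem_singleton] at this
    tauto
  have hιq : ∀ c, ι c ≠ part q := by
    intro c
    have := hιO c
    rw [hOdef, Finset.mem_compl] at this
    simp only [Finset.mem_insert, Finset.mem_singleton] at this
    tauto
  have hιx : ∀ c, ι c ≠ part x := by
    intro c
    have := hιO c
    rw [hOdef, Finset.mem_compl] at this
    simp only [Finset.mem_insert, Finset.mem_singleton] at this
    tauto
  have hinj : ∀ c c' : {y // y ∈ K}, ι c = ι c' → c = c' := by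
    intro c c' h
    have h2 := eO.injective (Subtype.ext h)
    have h4 := eK.symm.injective h2
    exact h4
  have hzex : ∀ c : {y // y ∈ K}, ∃ z, part z = ι c ∧
      ¬ MonoConn (IsPartiteEdge part) χ c.val p z := fun c =>
    exists_dodger hr hs hnc c.val p (ι c)
  choose z hz1 hz2 using hzex
  choose wf hwf using hne
  have hselex : ∀ i : Fin r, ∃ x' : V, part x' = i ∧ (i = part p → x' = p) ∧
      (i = part q → x' = w) ∧ (i = part x → x' = x) ∧
      (∀ c : {y // y ∈ K}, ι c = i → x' = z c) := by
    intro i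
    by_cases h1 : i = part p
    · exact ⟨p, h1.symm, fun _ => rfl, fun h => absurd (h1.symm.trans h) hpq,
        fun h => absurd (h1.symm.trans h).symm hx1,
        fun c hc => absurd (hc.trans h1) (hιp c)⟩
    · by_cases h2 : i = part q
      · refine ⟨w, hw.trans h2.symm, ?_, fun _ => rfl, ?_, ?_⟩
        · exact fun h => absurd h h1
        · exact fun h => absurd (h2.symm.trans h).symm hx2
        · exact fun c hc => absurd (hc.trans h2) (hιq c)
      · by_cases h3 : i = part x
        · exact ⟨x, h3.symm, fun h => absurd h h1, fun h => absurd h h2, fun _ => rfl,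
            fun c hc => absurd (hc.trans h3) (hιx c)⟩
        · by_cases h4 : ∃ c : {y // y ∈ K}, ι c = i
          · obtain ⟨c, hc⟩ := h4
            refine ⟨z c, hc ▸ hz1 c, fun h => absurd h h1, fun h => absurd h h2,
              fun h => absurd h h3, ?_⟩
            intro c' hc'
            rw [hinj c' c (hc'.trans hc.symm)]
          · exact ⟨wf i, hwf i, fun h => absurd h h1, fun h => absurd h h2,
              fun h => absurd h h3, fun c hc => absurd ⟨c, hc⟩ h4⟩
  choose g hgpart hgp hgq hgx hgz using hselex
  obtain ⟨γ, hγ⟩ := sel_edge χ g hgpart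
  have hgp' : g (part p) = p := hgp (part p) rfl
  have hgq' : g (part q) = w := hgq (part q) rfl
  have hgx' : g (part x) = x := hgx (part x) rfl
  have hγpw : MonoConn (IsPartiteEdge part) χ γ p w := by
    have := hγ (part p) (part q)
    rwa [hgp', hgq'] at this
  have hγpx : MonoConn (IsPartiteEdge part) χ γ p x := by
    have := hγ (part p) (part x)
    rwa [hgp', hgx'] at this
  have hγmem : γ ∈ G' ∪ Sᶜ := by
    rw [← hwAg, mem_Ag]
    exact hγpw
  by_cases e1 : γ = c1
  · exact m1 (e1 ▸ hγpx)
  by_cases e2 : γ = c2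
  · exact m2 (e2 ▸ hγpx)
  · have hγK : γ ∈ K := by
      rw [hKdef]
      exact Finset.mem_erase.mpr ⟨e2, Finset.mem_erase.mpr ⟨e1, hγmem⟩⟩
    set c₀ : {y // y ∈ K} := ⟨γ, hγK⟩ with hc₀
    have hgz' : g (ι c₀) = z c₀ := hgz (ι c₀) c₀ rfl
    have : MonoConn (IsPartiteEdge part) χ γ p (z c₀) := by
      have := hγ (part p) (ι c₀)
      rwa [hgp', hgz'] at this
    exact hz2 c₀ this

/-- Existence of a "type-2" vertex in a given class: fully `S`-connected to `p` but avoiding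
the `d`-component of `p`. -/
lemma type2 (hr : 3 ≤ r) (hne : ∀ i : Fin r, ∃ v, part v = i)
    (hs : Spanning (IsPartiteEdge part) χ) (hnc : ¬ CoversBy (IsPartiteEdge part) χ r)
    {p q : V} (hpq : part p ≠ part q)
    {S : Finset (Fin (2*r-1))}
    (hSpq : ∀ c, c ∈ S ↔ MonoConn (IsPartiteEdge part) χ c p q)
    (hs1 : r + 1 ≤ S.card) (hs2 : S.card ≤ 2*r-2)
    (i : Fin r) (hi1 : i ≠ part p) (hi2 : i ≠ part q)
    {d : Fin (2*r-1)} (hd : d ∈ Sᶜ) :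
    ∃ x, part x = i ∧ ¬ MonoConn (IsPartiteEdge part) χ d p x ∧
      ∀ c ∈ S, MonoConn (IsPartiteEdge part) χ c p x := by
  by_contra hcon
  push_neg at hcon
  have key : ∀ x, part x = i → MonoConn (IsPartiteEdge part) χ d p x ∨
      MonoConn (IsPartiteEdge part) χ d q x := by
    intro x hxi
    by_cases hdp : MonoConn (IsPartiteEdge part) χ d p x
    · exact Or.inl hdp
    obtain ⟨c, hcS, hcp⟩ := hcon x hxi hdp
    obtain ⟨G₀, hG₀sub, hG₀card⟩ := Finset.exists_subset_card_eq (s := S.erase c) (n := S.card - r - 1)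
      (by rw [Finset.card_erase_of_mem hcS]; omega)
    have hcG₀ : c ∉ G₀ := fun h => (Finset.mem_erase.mp (hG₀sub h)).1 rfl
    set G' := insert c G₀ with hG'def
    have hG'S : G' ⊆ S := by
      intro y hy
      rcases Finset.mem_insert.mp hy with rfl | hy
      · exact hcS
      · exact Finset.mem_of_mem_erase (hG₀sub hy)
    have hG'card : G'.card = S.card - r := by
      rw [hG'def, Finset.card_insert_of_notMem hcG₀, hG₀card]
      omega
    have hGcard : (G' ∪ Sᶜ).card = r - 1 := unionSc_card hr hG'S hG'card hs1
    have hcG' : c ∈ G' ∪ Sᶜ := Finset.mem_union_left _ (Finset.mem_insert_self c G₀)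
    have hdG' : d ∈ G' ∪ Sᶜ := Finset.mem_union_right _ hd
    have hcd : c ≠ d := by
      intro h
      rw [h] at hcS
      exact (Finset.mem_compl.mp hd) hcS
    have hx1 : part x ≠ part p := by rw [hxi]; exact hi1
    have hx2 : part x ≠ part q := by rw [hxi]; exact hi2
    obtain ⟨v', hv'⟩ := realizer hr hne hs hnc hpq hSpq hs1 hs2 hG'S hG'card
    rcases hv' with ⟨hv'q, hv'Ag⟩ | ⟨hv'p, hv'Ag⟩
    · exact (rigidity hr hne hs hnc hpq hGcard hv'q hv'Ag hx1 hx2 hcG' hdG' hcd hcp hdp).elim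
    · by_cases hdq : MonoConn (IsPartiteEdge part) χ d q x
      · exact Or.inr hdq
      · have hcq : ¬ MonoConn (IsPartiteEdge part) χ c q x := fun h =>
          hcp (mc_trans ((hSpq c).mp hcS) h)
        exact (rigidity hr hne hs hnc (Ne.symm hpq) hGcard hv'p hv'Ag hx2 hx1
          hcG' hdG' hcd hcq hdq).elim
  exact two_center hr hs hnc d p q i key

set_option maxHeartbeats 1000000 in
/-- The final edge: contradiction in the main case. -/
lemma recipe (hr : 3 ≤ r) (hne : ∀ i : Fin r, ∃ v, part v = i)
    (hs : Spanning (IsPartiteEdge part) χ) (hnc : ¬ CoversBy (IsPartiteEdge part) χ r)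
    {p q : V} (hpq : part p ≠ part q)
    {S : Finset (Fin (2*r-1))}
    (hSpq : ∀ c, c ∈ S ↔ MonoConn (IsPartiteEdge part) χ c p q)
    (hs1 : r + 1 ≤ S.card) (hs2 : S.card ≤ 2*r-2)
    {G : Finset (Fin (2*r-1))} (hGS : G ⊆ S) (hG : G.card = S.card - r)
    {v : V} (hv : part v = part q) (hAg : Ag part χ p v = G ∪ Sᶜ) : False := by
  classical
  have hGne : G.Nonempty := by
    rw [← Finset.card_pos, hG]
    omega
  obtain ⟨gs, hgs⟩ := hGne
  obtain ⟨u, hu_part, hu_dodge⟩ := exists_dodger hr hs hnc gs p (part p)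
  set K : Finset (Fin (2*r-1)) := (G.erase gs) ∪ Sᶜ with hKdef
  have hKcard : K.card = r - 2 := by
    have hdisj : Disjoint (G.erase gs) Sᶜ := (disjoint_compl_right).mono_left
      ((Finset.erase_subset _ _).trans hGS)
    have hSle : S.card ≤ 2*r-1 := by
      have := Finset.card_le_univ S
      simpa [Fintype.card_fin] using this
    rw [hKdef, Finset.card_union_of_disjoint hdisj, Finset.card_erase_of_mem hgs, hG,
      Finset.card_compl]
    simp only [Fintype.card_fin]
    omega
  set O : Finset (Fin r) := ({part p, part q} : Finset (Fin r))ᶜ with hOdef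
  have hOcard : O.card = r - 2 := by
    rw [hOdef, Finset.card_compl]
    rw [Finset.card_insert_of_notMem (by simpa using hpq), Finset.card_singleton]
    simp
  set eK := K.orderIsoOfFin hKcard with heK
  set eO := O.orderIsoOfFin hOcard with heO
  set ι : {y // y ∈ K} → Fin r := fun c => (eO (eK.symm c) : Fin r) with hιdef
  have hιO : ∀ c, ι c ∈ O := fun c => (eO (eK.symm c)).2
  have hιp : ∀ c, ι c ≠ part p := by
    intro c
    have := hιO c
    rw [hOdef, Finset.mem_compl] at this
    simp only [Finset.mem_insert, Finset.mem_singleton] at this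
    tauto
  have hιq : ∀ c, ι c ≠ part q := by
    intro c
    have := hιO c
    rw [hOdef, Finset.mem_compl] at this
    simp only [Finset.mem_insert, Finset.mem_singleton] at this
    tauto
  have hinj : ∀ c c' : {y // y ∈ K}, ι c = ι c' → c = c' := by
    intro c c' h
    exact eK.symm.injective (eO.injective (Subtype.ext h))
  have hyex : ∀ c : {y // y ∈ K}, ∃ x, part x = ι c ∧
      ¬ MonoConn (IsPartiteEdge part) χ c.val p x ∧
      (c.val ∈ Sᶜ → ∀ c' ∈ S, MonoConn (IsPartiteEdge part) χ c' p x) := by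
    intro c
    by_cases hcS : c.val ∈ Sᶜ
    · obtain ⟨x, h1, h2, h3⟩ := type2 hr hne hs hnc hpq hSpq hs1 hs2 (ι c) (hιp c) (hιq c) hcS
      exact ⟨x, h1, h2, fun _ => h3⟩
    · obtain ⟨x, h1, h2⟩ := exists_dodger hr hs hnc c.val p (ι c)
      exact ⟨x, h1, h2, fun h => absurd h hcS⟩
  choose y hy1 hy2 hy3 using hyex
  choose wf hwf using hne
  have hselex : ∀ i : Fin r, ∃ x' : V, part x' = i ∧ (i = part p → x' = u) ∧
      (i = part q → x' = v) ∧
      (∀ c : {y // y ∈ K}, ι c = i → x' = y c) := by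
    intro i
    by_cases h1 : i = part p
    · exact ⟨u, hu_part.trans h1.symm, fun _ => rfl, fun h => absurd (h1.symm.trans h) hpq,
        fun c hc => absurd (hc.trans h1) (hιp c)⟩
    · by_cases h2 : i = part q
      · exact ⟨v, hv.trans h2.symm, fun h => absurd h h1, fun _ => rfl,
          fun c hc => absurd (hc.trans h2) (hιq c)⟩
      · by_cases h4 : ∃ c : {y // y ∈ K}, ι c = i
        · obtain ⟨c, hc⟩ := h4
          refine ⟨y c, hc ▸ hy1 c, fun h => absurd h h1, fun h => absurd h h2, ?_⟩
          intro c' hc'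
          rw [hinj c' c (hc'.trans hc.symm)]
        · exact ⟨wf i, hwf i, fun h => absurd h h1, fun h => absurd h h2,
            fun c hc => absurd ⟨c, hc⟩ h4⟩
  choose g hgpart hgu hgv hgy using hselex
  obtain ⟨γ, hγ⟩ := sel_edge χ g hgpart
  have hgu' : g (part p) = u := hgu (part p) rfl
  have hgv' : g (part q) = v := hgv (part q) rfl
  have h_v_y : ∀ c : {y // y ∈ K}, MonoConn (IsPartiteEdge part) χ γ v (y c) := by
    intro c
    have := hγ (part q) (ι c)
    rwa [hgv', hgy (ι c) c rfl] at this
  have h_v_u : MonoConn (IsPartiteEdge part) χ γ v u := by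
    have := hγ (part q) (part p)
    rwa [hgv', hgu'] at this
  have hScne : Sᶜ.Nonempty := by
    rw [← Finset.card_pos, Finset.card_compl]
    simp only [Fintype.card_fin]
    omega
  obtain ⟨d₀, hd₀⟩ := hScne
  have hd₀K : d₀ ∈ K := by
    rw [hKdef]; exact Finset.mem_union_right _ hd₀
  set c₀ : {y // y ∈ K} := ⟨d₀, hd₀K⟩ with hc₀def
  by_cases hγS : γ ∈ S
  · by_cases hγG : γ ∈ G
    · have hpv : MonoConn (IsPartiteEdge part) χ γ p v := by
        rw [← mem_Ag (part := part) (χ := χ), hAg]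
        exact Finset.mem_union_left _ hγG
      by_cases hγgs : γ = gs
      · exact hu_dodge (hγgs ▸ mc_trans hpv h_v_u)
      · have hγK : γ ∈ K := by
          rw [hKdef]
          exact Finset.mem_union_left _ (Finset.mem_erase.mpr ⟨hγgs, hγG⟩)
        exact hy2 ⟨γ, hγK⟩ (mc_trans hpv (h_v_y ⟨γ, hγK⟩))
    · have hfull : MonoConn (IsPartiteEdge part) χ γ p (y c₀) := hy3 c₀ hd₀ γ hγS
      have hpv : MonoConn (IsPartiteEdge part) χ γ p v :=
        mc_trans hfull (mc_symm (h_v_y c₀))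
      have hmem : γ ∈ G ∪ Sᶜ := by
        rw [← hAg, mem_Ag]
        exact hpv
      rcases Finset.mem_union.mp hmem with h | h
      · exact hγG h
      · exact (Finset.mem_compl.mp h) hγS
  · have hγSc : γ ∈ Sᶜ := Finset.mem_compl.mpr hγS
    have hγK : γ ∈ K := by
      rw [hKdef]; exact Finset.mem_union_right _ hγSc
    have hpv : MonoConn (IsPartiteEdge part) χ γ p v := by
      rw [← mem_Ag (part := part) (χ := χ), hAg]
      exact Finset.mem_union_right _ hγSc
    exact hy2 ⟨γ, hγK⟩ (mc_trans hpv (h_v_y ⟨γ, hγK⟩))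

/-- The main case: `r+1 ≤ |S| ≤ 2r-2` is impossible. -/
lemma case_main (hr : 3 ≤ r) (hne : ∀ i : Fin r, ∃ v, part v = i)
    (hs : Spanning (IsPartiteEdge part) χ) (hnc : ¬ CoversBy (IsPartiteEdge part) χ r)
    {a b : V} (hab : part a ≠ part b)
    (hs1 : r + 1 ≤ (Ag part χ a b).card) (hs2 : (Ag part χ a b).card ≤ 2*r-2) : False := by
  set S := Ag part χ a b with hSdef
  have hSpq : ∀ c, c ∈ S ↔ MonoConn (IsPartiteEdge part) χ c a b := fun c => mem_Ag
  obtain ⟨G, hGS, hGcard⟩ := Finset.exists_subset_card_eq (s := S) (n := S.card - r) (by omega)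
  obtain ⟨v, hv⟩ := realizer hr hne hs hnc hab hSpq hs1 hs2 hGS hGcard
  rcases hv with ⟨h1, h2⟩ | ⟨h1, h2⟩
  · exact recipe hr hne hs hnc hab hSpq hs1 hs2 hGS hGcard h1 h2
  · have hSpq' : ∀ c, c ∈ S ↔ MonoConn (IsPartiteEdge part) χ c b a := fun c =>
      ⟨fun h => mc_symm ((hSpq c).mp h), fun h => (hSpq c).mpr (mc_symm h)⟩
    exact recipe hr hne hs hnc (Ne.symm hab) hSpq' hs1 hs2 hGS hGcard h1 h2

set_option maxHeartbeats 1000000 in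
/-- The extreme case: `a` and `b` connected in all `2r-1` colors is impossible. -/
lemma w2 (hr : 3 ≤ r) (hne : ∀ i : Fin r, ∃ v, part v = i)
    (hs : Spanning (IsPartiteEdge part) χ) (hnc : ¬ CoversBy (IsPartiteEdge part) χ r)
    {a b : V} (hab : part a ≠ part b)
    (hall : (Ag part χ a b).card = 2*r-1) : False := by
  classical
  have hAgab : Ag part χ a b = Finset.univ :=
    Finset.eq_univ_of_card _ (by rw [hall]; simp [Fintype.card_fin])
  have hallc : ∀ c, MonoConn (IsPartiteEdge part) χ c a b := by
    intro c
    rw [← mem_Ag (part := part) (χ := χ), hAgab]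
    exact Finset.mem_univ c
  have w2_real : ∀ T : Finset (Fin (2*r-1)), T.card = r - 1 → ∃ v, Ag part χ a v = T := by
    intro T hT
    have hTc : Tᶜ.card = r := by
      rw [Finset.card_compl, hT]
      simp only [Fintype.card_fin]
      omega
    obtain ⟨v, hesc⟩ := escape hnc Tᶜ hTc a
    have hsub : Ag part χ a v ⊆ T := by
      intro c hc
      by_contra h
      exact hesc c (Finset.mem_compl.mpr h) (mem_Ag.mp hc)
    refine ⟨v, Finset.eq_of_subset_of_card_le hsub ?_⟩
    rw [hT]
    by_cases hva : part v = part a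
    · have hAgeq : Ag part χ a v = Ag part χ b v := by
        ext c
        rw [mem_Ag, mem_Ag]
        exact ⟨fun h => mc_trans (mc_symm (hallc c)) h, fun h => mc_trans (hallc c) h⟩
      rw [hAgeq]
      exact Ag_card_ge hr hne hs hnc (by rw [hva]; exact Ne.symm hab)
    · exact Ag_card_ge hr hne hs hnc (fun h => hva h.symm)
  choose vT hvT using w2_real
  have ag_block : ∀ (v z : V) (T P : Finset (Fin (2*r-1))), Ag part χ a v = T →
      Ag part χ a z = P → Ag part χ v z ⊆ (T ∩ P) ∪ (T ∪ P)ᶜ := by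
    intro v z T P hv hz c hc
    rw [mem_Ag] at hc
    rw [Finset.mem_union, Finset.mem_inter, Finset.mem_compl, Finset.mem_union]
    by_cases hcT : c ∈ T
    · by_cases hcP : c ∈ P
      · exact Or.inl ⟨hcT, hcP⟩
      · exfalso
        have h1 : MonoConn (IsPartiteEdge part) χ c a v := mem_Ag.mp (by rw [hv]; exact hcT)
        have h2 : ¬ MonoConn (IsPartiteEdge part) χ c a z := fun h =>
          hcP (by rw [← hz]; exact mem_Ag.mpr h)
        exact h2 (mc_trans h1 hc)
    · by_cases hcP : c ∈ P
      · exfalso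
        have h1 : MonoConn (IsPartiteEdge part) χ c a z := mem_Ag.mp (by rw [hz]; exact hcP)
        have h2 : ¬ MonoConn (IsPartiteEdge part) χ c a v := fun h =>
          hcT (by rw [← hv]; exact mem_Ag.mpr h)
        exact h2 (mc_trans h1 (mc_symm hc))
      · exact Or.inr (fun h => h.elim hcT hcP)
  have disj_eq : ∀ (T T' : Finset (Fin (2*r-1))) (hT : T.card = r-1) (hT' : T'.card = r-1),
      Disjoint T T' → part (vT T hT) = part (vT T' hT') := by
    intro T T' hT hT' hdisj
    by_contra hne'
    have hlb := Ag_card_ge hr hne hs hnc hne'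
    have hsub := ag_block (vT T hT) (vT T' hT') T T' (hvT T hT) (hvT T' hT')
    have hie : T ∩ T' = ∅ := Finset.disjoint_iff_inter_eq_empty.mp hdisj
    have hcu : (T ∪ T').card = 2*r-2 := by
      rw [Finset.card_union_of_disjoint hdisj, hT, hT']
      omega
    have hub : (Ag part χ (vT T hT) (vT T' hT')).card ≤ 1 := by
      calc (Ag part χ (vT T hT) (vT T' hT')).card
          ≤ ((T ∩ T') ∪ (T ∪ T')ᶜ).card := Finset.card_le_card hsub
        _ ≤ (T ∩ T').card + (T ∪ T')ᶜ.card := Finset.card_union_le _ _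
        _ ≤ 1 := by
            rw [hie, Finset.card_empty, Finset.card_compl, hcu]
            simp only [Fintype.card_fin]
            omega
    omega
  have kneser : ∀ (n : ℕ) (T T' : Finset (Fin (2*r-1))) (hT : T.card = r-1)
      (hT' : T'.card = r-1), (T \ T').card = n → part (vT T hT) = part (vT T' hT') := by
    intro n
    induction n using Nat.strong_induction_on with
    | _ n ih =>
      intro T T' hT hT' hcard
      by_cases hn : n = 0
      · subst hn
        have hTT' : T = T' := by
          have hsub : T ⊆ T' := by
            rw [← Finset.sdiff_eq_empty_iff_subset]
            exact Finset.card_eq_zero.mp hcard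
          exact Finset.eq_of_subset_of_card_le hsub (by omega)
        subst hTT'
        rfl
      · have hTne : (T \ T').Nonempty := by
          rw [← Finset.card_pos, hcard]
          omega
        obtain ⟨y, hy⟩ := hTne
        have hT'ne : (T' \ T).Nonempty := by
          rw [← Finset.card_pos, Finset.card_sdiff_comm (hT'.trans hT.symm), hcard]
          omega
        obtain ⟨x, hx⟩ := hT'ne
        have hyT : y ∈ T := (Finset.mem_sdiff.mp hy).1
        have hxT' : x ∈ T' := (Finset.mem_sdiff.mp hx).1
        have hxT : x ∉ T := (Finset.mem_sdiff.mp hx).2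
        set T₁ := insert x (T.erase y) with hT₁def
        have hxnotin : x ∉ T.erase y := fun h => hxT (Finset.mem_of_mem_erase h)
        have hT₁ : T₁.card = r - 1 := by
          rw [hT₁def, Finset.card_insert_of_notMem hxnotin,
            Finset.card_erase_of_mem hyT, hT]
          omega
        have hunion : T ∪ T₁ = insert x T := by
          rw [hT₁def, Finset.union_insert, Finset.union_eq_left.mpr (Finset.erase_subset y T)]
        have hWcard : ((T ∪ T₁)ᶜ).card = r - 1 := by
          rw [Finset.card_compl, hunion, Finset.card_insert_of_notMem hxT, hT]
          simp only [Fintype.card_fin]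
          omega
        have hd1 : Disjoint ((T ∪ T₁)ᶜ) T :=
          (disjoint_compl_left).mono_right Finset.subset_union_left
        have hd2 : Disjoint ((T ∪ T₁)ᶜ) T₁ :=
          (disjoint_compl_left).mono_right Finset.subset_union_right
        have e1 : part (vT T hT) = part (vT ((T ∪ T₁)ᶜ) hWcard) :=
          (disj_eq ((T ∪ T₁)ᶜ) T hWcard hT hd1).symm
        have e2 : part (vT ((T ∪ T₁)ᶜ) hWcard) = part (vT T₁ hT₁) :=
          disj_eq ((T ∪ T₁)ᶜ) T₁ hWcard hT₁ hd2
        have hstep : (T₁ \ T').card = n - 1 := by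
          have h1 : T₁ \ T' = (T \ T').erase y := by
            rw [hT₁def, Finset.insert_sdiff_of_mem _ hxT']
            ext c
            simp only [Finset.mem_sdiff, Finset.mem_erase]
            tauto
          rw [h1, Finset.card_erase_of_mem hy, hcard]
        have e3 : part (vT T₁ hT₁) = part (vT T' hT') :=
          ih (n-1) (by omega) T₁ T' hT₁ hT' hstep
        rw [e1, e2, e3]
  obtain ⟨T₀, _, hT₀⟩ := Finset.exists_subset_card_eq (s := (Finset.univ : Finset (Fin (2*r-1)))) (n := r-1)
    (by simp only [Finset.card_univ, Fintype.card_fin]; omega)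
  set κ := part (vT T₀ hT₀) with hκdef
  have hκall : ∀ (T : Finset (Fin (2*r-1))) (hT : T.card = r-1), part (vT T hT) = κ := by
    intro T hT
    exact kneser ((T \ T₀).card) T T₀ hT hT₀ rfl
  have hfull : ∀ z : V, part z ≠ κ → Ag part χ a z = Finset.univ := by
    intro z hz
    set P := Ag part χ a z with hPdef
    have hPlb : r - 1 ≤ P.card := by
      by_cases hza : part z = part a
      · have hAgeq : P = Ag part χ b z := by
          rw [hPdef]
          ext c
          rw [mem_Ag, mem_Ag]
          exact ⟨fun h => mc_trans (mc_symm (hallc c)) h, fun h => mc_trans (hallc c) h⟩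
        rw [hAgeq]
        exact Ag_card_ge hr hne hs hnc (by rw [hza]; exact Ne.symm hab)
      · exact Ag_card_ge hr hne hs hnc (fun h => hza h.symm)
    by_contra hPneq
    have hPub : P.card ≤ 2*r-2 := by
      have h1 : P ⊂ Finset.univ := Finset.ssubset_univ_iff.mpr hPneq
      have := Finset.card_lt_card h1
      simp only [Finset.card_univ, Fintype.card_fin] at this
      omega
    by_cases hsmall : P.card ≤ r
    · have hPc : r - 1 ≤ Pᶜ.card := by
        rw [Finset.card_compl]
        simp only [Fintype.card_fin]
        omega
      obtain ⟨T, hTsub, hTcard⟩ := Finset.exists_subset_card_eq (s := Pᶜ) (n := r-1) hPc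
      have hvκ : part (vT T hTcard) = κ := hκall T hTcard
      have hcross : part (vT T hTcard) ≠ part z := by rw [hvκ]; exact Ne.symm hz
      have hlb := Ag_card_ge hr hne hs hnc hcross
      have hsub := ag_block (vT T hTcard) z T P (hvT T hTcard) rfl
      have hdisjTP : Disjoint T P := by
        rw [Finset.disjoint_left]
        intro c hcT hcP
        exact (Finset.mem_compl.mp (hTsub hcT)) hcP
      have hie : T ∩ P = ∅ := Finset.disjoint_iff_inter_eq_empty.mp hdisjTP
      have hub : (Ag part χ (vT T hTcard) z).card ≤ r - P.card := by
        calc (Ag part χ (vT T hTcard) z).card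
            ≤ ((T ∩ P) ∪ (T ∪ P)ᶜ).card := Finset.card_le_card hsub
          _ ≤ (T ∩ P).card + (T ∪ P)ᶜ.card := Finset.card_union_le _ _
          _ ≤ r - P.card := by
              rw [hie, Finset.card_empty, Finset.card_compl,
                Finset.card_union_of_disjoint hdisjTP, hTcard]
              simp only [Fintype.card_fin]
              omega
      omega
    · obtain ⟨E, hEsub, hEcard⟩ := Finset.exists_subset_card_eq (s := P) (n := P.card - r) (by omega)
      set T := Pᶜ ∪ E with hTdef
      have hdisjE : Disjoint (Pᶜ) E := by
        rw [Finset.disjoint_left]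
        intro c hc hcE
        exact (Finset.mem_compl.mp hc) (hEsub hcE)
      have hTcard : T.card = r - 1 := by
        rw [hTdef, Finset.card_union_of_disjoint hdisjE, Finset.card_compl, hEcard]
        simp only [Fintype.card_fin]
        omega
      have hvκ : part (vT T hTcard) = κ := hκall T hTcard
      have hcross : part (vT T hTcard) ≠ part z := by rw [hvκ]; exact Ne.symm hz
      have hlb := Ag_card_ge hr hne hs hnc hcross
      have hsub := ag_block (vT T hTcard) z T P (hvT T hTcard) rfl
      have hie : T ∩ P = E := by
        rw [hTdef]
        ext c
        simp only [Finset.mem_inter, Finset.mem_union, Finset.mem_compl]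
        constructor
        · rintro ⟨hc1 | hc1, hc2⟩
          · exact absurd hc2 hc1
          · exact hc1
        · intro hc
          exact ⟨Or.inr hc, hEsub hc⟩
      have huniv : T ∪ P = Finset.univ := by
        rw [hTdef]
        apply Finset.eq_univ_of_forall
        intro c
        simp only [Finset.mem_union, Finset.mem_compl]
        by_cases h : c ∈ P
        · exact Or.inr h
        · exact Or.inl (Or.inl h)
      have hub : (Ag part χ (vT T hTcard) z).card ≤ P.card - r := by
        calc (Ag part χ (vT T hTcard) z).card
            ≤ ((T ∩ P) ∪ (T ∪ P)ᶜ).card := Finset.card_le_card hsub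
          _ ≤ (T ∩ P).card + (T ∪ P)ᶜ.card := Finset.card_union_le _ _
          _ ≤ P.card - r := by
              rw [hie, hEcard, huniv, Finset.compl_univ, Finset.card_empty]
              omega
      omega
  have hex : ∃ i₀ : Fin r, i₀ ≠ κ := by
    by_cases h : κ = ⟨0, by omega⟩
    · refine ⟨⟨1, by omega⟩, ?_⟩
      rw [h]
      intro hh
      have := congrArg Fin.val hh
      simp at this
    · exact ⟨⟨0, by omega⟩, fun hh => h hh.symm⟩
  obtain ⟨i₀, hi₀⟩ := hex
  obtain ⟨z, hz_part, hz_dodge⟩ := exists_dodger hr hs hnc ⟨0, by omega⟩ a i₀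
  have hzfull : Ag part χ a z = Finset.univ := hfull z (by rw [hz_part]; exact hi₀)
  exact hz_dodge (mem_Ag.mp (by rw [hzfull]; exact Finset.mem_univ _))

end Main

end Stmt10Aux

theorem stmt_10 [Fintype V] {r : ℕ} (hr : 3 ≤ r)
    (part : V → Fin r) (hne : ∀ i : Fin r, ∃ v, part v = i)
    (χ : Finset V → Fin (2 * r - 1)) (hs : Spanning (IsPartiteEdge part) χ)
    (hnc : ¬ CoversBy (IsPartiteEdge part) χ r)
    (a b : V) (hab : part a ≠ part b) :
    r - 1 ≤ HamDist (IsPartiteEdge part) χ a b ∧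
      HamDist (IsPartiteEdge part) χ a b ≤ r := by
  classical
  have hsum : (Stmt10Aux.Ag part χ a b).card + HamDist (IsPartiteEdge part) χ a b
      = 2 * r - 1 := by
    have h := Finset.card_filter_add_card_filter_not
      (s := (Finset.univ : Finset (Fin (2*r-1))))
      (p := fun c => MonoConn (IsPartiteEdge part) χ c a b)
    simp only [Finset.card_univ, Fintype.card_fin] at h
    unfold HamDist Stmt10Aux.Ag
    convert h using 3
  have hge : r - 1 ≤ (Stmt10Aux.Ag part χ a b).card :=
    Stmt10Aux.Ag_card_ge hr hne hs hnc hab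
  have hle : (Stmt10Aux.Ag part χ a b).card ≤ r := by
    by_contra h
    push_neg at h
    have hcap : (Stmt10Aux.Ag part χ a b).card ≤ 2*r-1 := by
      have := Finset.card_le_univ (Stmt10Aux.Ag part χ a b)
      simpa [Fintype.card_fin] using this
    by_cases htop : (Stmt10Aux.Ag part χ a b).card = 2*r-1
    · exact Stmt10Aux.w2 hr hne hs hnc hab htop
    · exact Stmt10Aux.case_main hr hne hs hnc hab (by omega) (by omega)
  constructor <;> omega
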